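/- Recursive formula for the deformed Verblunsky coefficients (Proposition 2.5(b)): Let n ≥ 1 and α_0,…,α_{n−1} ∈ ℂ with |α_k| < 1 for 0 ≤ k ≤ n−2 and |α_{n−1}| = 1, let (Φ_j) be the monic polynomials generated by the Szegő recursion, and suppose Φ_j(1) ≠ 0 for all 0 ≤ j ≤ n−1. Define γ_k = 1 − Φ_{k+1}(1)/Φ_k(1) for 0 ≤ k ≤ n−1. Then γ_0 = conj(α_0) and, for 1 ≤ k ≤ n−1, γ_k = conj(α_k)·∏_{j=0}^{k−1} (1−conj(γ_j))/(1−γ_j). -/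

import Mathlib

open MeasureTheory Complex Finset
open scoped Real ComplexConjugate

noncomputable section

/-- The monic orthogonal (Szegő) polynomials generated by the Szegő recursion
`Φ₀ = 1`, `Φ_{j+1}(z) = z Φ_j(z) - conj(α_j) Φ_j^*(z)`, where
`Φ_j^*` is the reversed polynomial (conjugated coefficients in reverse order). -/
def szego (α : ℕ → ℂ) : ℕ → Polynomial ℂ
  | 0 => 1
  | j + 1 =>
      Polynomial.X * szego α j -
        Polynomial.C ((starRingEnd ℂ) (α j)) *
          Polynomial.reflect j ((szego α j).map (starRingEnd ℂ))

/-- The deformed Verblunsky coefficients `γ_k = 1 - Φ_{k+1}(1)/Φ_k(1)`. -/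
def gammaCoeff (α : ℕ → ℂ) (k : ℕ) : ℂ :=
  1 - (szego α (k + 1)).eval 1 / (szego α k).eval 1

lemma szego_natDegree_le (α : ℕ → ℂ) : ∀ j, (szego α j).natDegree ≤ j := by
  intro j
  induction j with
  | zero => simp [szego]
  | succ j ih =>
    rw [szego]
    refine (Polynomial.natDegree_sub_le _ _).trans (max_le ?_ ?_)
    · refine (Polynomial.natDegree_mul_le).trans ?_
      simp only [Polynomial.natDegree_X]
      omega
    · refine (Polynomial.natDegree_mul_le).trans ?_
      simp only [Polynomial.natDegree_C, zero_add]
      refine le_trans ?_ (Nat.le_succ j)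
      refine Polynomial.natDegree_le_iff_coeff_eq_zero.mpr fun i hi => ?_
      rw [Polynomial.coeff_reflect, Polynomial.revAt_eq_self_of_lt hi]
      exact Polynomial.coeff_eq_zero_of_natDegree_lt
        (lt_of_le_of_lt ((Polynomial.natDegree_map_le).trans ih) hi)

lemma szego_eval_succ (α : ℕ → ℂ) (j : ℕ) :
    (szego α (j + 1)).eval 1 =
      (szego α j).eval 1 - conj (α j) * conj ((szego α j).eval 1) := by
  rw [szego]
  have hdeg : ((szego α j).map (starRingEnd ℂ)).natDegree ≤ j :=
    (Polynomial.natDegree_map_le).trans (szego_natDegree_le α j)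
  haveI : Invertible (1 : ℂ) := invertibleOne
  have this1 := Polynomial.eval₂_reflect_mul_pow (RingHom.id ℂ) (1 : ℂ) j
    ((szego α j).map (starRingEnd ℂ)) hdeg
  simp only [invOf_one, one_pow, mul_one] at this1
  have h2 : (Polynomial.reflect j ((szego α j).map (starRingEnd ℂ))).eval 1
      = conj ((szego α j).eval 1) := by
    rw [show Polynomial.eval (1:ℂ) = Polynomial.eval₂ (RingHom.id ℂ) 1 from rfl, this1,
      show Polynomial.eval₂ (RingHom.id ℂ) (1:ℂ) = Polynomial.eval 1 from rfl,
      Polynomial.eval_map, show (1:ℂ) = conj 1 by simp, Polynomial.eval₂_at_apply]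
    simp
  simp [h2]

/-- **Proposition 2.5(b)**: the deformed Verblunsky coefficients
`γ_k = 1 - Φ_{k+1}(1)/Φ_k(1)` satisfy `γ₀ = conj α₀` and the recursion
`γ_k = conj(α_k) ∏_{j<k} (1 - conj γ_j)/(1 - γ_j)`. -/
theorem gammaCoeff_recursion (n : ℕ) (hn : 1 ≤ n) (α : ℕ → ℂ)
    (h1 : ∀ k, k + 1 < n → ‖α k‖ < 1)
    (h2 : ‖α (n - 1)‖ = 1)
    (hΦ : ∀ j < n, (szego α j).eval 1 ≠ 0) :
    gammaCoeff α 0 = (starRingEnd ℂ) (α 0) ∧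
    ∀ k, 1 ≤ k → k ≤ n - 1 →
      gammaCoeff α k = (starRingEnd ℂ) (α k) *
        ∏ j ∈ Finset.range k,
          (1 - (starRingEnd ℂ) (gammaCoeff α j)) / (1 - gammaCoeff α j) := by
  have key : ∀ k, k < n → gammaCoeff α k
      = conj (α k) * conj ((szego α k).eval 1) / (szego α k).eval 1 := by
    intro k hk
    have h0 := hΦ k hk
    rw [gammaCoeff, szego_eval_succ]
    field_simp
    ring
  constructor
  · rw [key 0 hn]
    simp [szego]
  · intro k hk1 hk2
    have hkn : k < n := by omega
    have prod_eq : ∀ m, m ≤ k →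
        ∏ j ∈ Finset.range m,
          (1 - conj (gammaCoeff α j)) / (1 - gammaCoeff α j)
        = conj ((szego α m).eval 1) / ((szego α m).eval 1) := by
      intro m hm
      induction m with
      | zero => simp [szego]
      | succ m ih =>
        have hm0 := hΦ m (by omega)
        have hm1 := hΦ (m + 1) (by omega)
        have hm0' : conj ((szego α m).eval 1) ≠ 0 := by
          intro h; exact hm0 (by simpa using congrArg (starRingEnd ℂ) h)
        have hm1' : conj ((szego α (m + 1)).eval 1) ≠ 0 := by
          intro h; exact hm1 (by simpa using congrArg (starRingEnd ℂ) h)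
        have h1g : 1 - gammaCoeff α m
            = (szego α (m + 1)).eval 1 / (szego α m).eval 1 := by
          rw [gammaCoeff]; ring
        have h1g' : 1 - conj (gammaCoeff α m)
            = conj ((szego α (m + 1)).eval 1) / conj ((szego α m).eval 1) := by
          rw [show (1 : ℂ) = conj 1 by simp, ← map_sub, h1g, map_div₀]
          simp
        rw [Finset.prod_range_succ, ih (by omega), h1g, h1g']
        field_simp
    rw [key k hkn, prod_eq k le_rfl, mul_div_assoc]
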